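/- Let A = D ◊_{σ,α} G with G finite non-Abelian, W = Ker σ, α satisfying URC on W, and let C be a ray class of W with N_G(C) = G that is constant under f. If d_C ∈ D∖{0} satisfies σ_x(d_C)·f(x,C) = d_C for all x ∈ G and some x has f(x,C) ≠ 1, then d_C lies in I_C = {d ∈ D : σ_x(d) = d·f(x,C)^{-1} for all x with f(x,C) ≠ 1}, and I_C is a D^G-module of rank 1 that is not multiplicatively closed. -/
import Mathlib


/-- The map `f(x,g) = α(x,g)/α(xgx⁻¹,x)`. -/
def crysF {G K : Type*} [Group G] [Field K] (α : G → G → K) (x g : G) : K :=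
  α x g / α (x * g * x⁻¹) x

/-- The set `I_C = {d ∈ D : σ_x(d) = d·f(x,C)⁻¹ for all x with f(x,C) ≠ 1}`,
where `f(x,C) = f(x,g₀)` for a chosen representative `g₀` of the ray class `C`
(constant under `f`). -/
def crysIC {G K : Type*} [Group G] [Field K] (D : Subring K)
    (σ : G →* RingAut K) (α : G → G → K) (g₀ : G) : Set K :=
  {a : K | a ∈ D ∧ ∀ x : G, crysF α x g₀ ≠ 1 →
    σ x a = a * (crysF α x g₀)⁻¹}

/-- Let `A = D ◊_{σ,α} G` with `D` a Dedekind domain inside its fraction field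
`K`, `G` finite non-Abelian, `W = Ker σ`, `α` satisfying the URC on `W`, and let
`C` be a ray class of `W` (with representative `g₀ ∈ C`) with `N_G(C) = G` which
is constant under `f` (so `f(x,C) := f(x,g₀)` is well defined).  If
`d_C ∈ D \ {0}` satisfies `σ_x(d_C)·f(x,C) = d_C` for all `x ∈ G` and
`f(x,C) ≠ 1` for some `x`, then `d_C ∈ I_C`, and `I_C` is a `D^G`-module
(closed under addition and multiplication by `G`-fixed elements of `D`) of rank
`1` (`a/b ∈ K^G` for nonzero `a, b ∈ I_C`) which is not multiplicatively
closed. -/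
theorem dC_mem_IC_and_IC_rank_one {G K : Type*} [Group G] [Fintype G] [Field K]
    (D : Subring K) (hDed : IsDedekindDomain D)
    (σ : G →* RingAut K) (hσD : ∀ (x : G), ∀ d ∈ D, σ x d ∈ D)
    (α : G → G → K) (hαD : ∀ g h : G, α g h ∈ D) (hα : ∀ g h : G, α g h ≠ 0)
    (C : Finset G) (g₀ : G) (hg₀ : g₀ ∈ C)
    (hCW : ∀ g ∈ C, σ g = 1)
    (hCreg : ∀ g ∈ C, ∀ k : G, σ k = 1 → crysF α k g = 1)
    (hCconst : ∀ g ∈ C, ∀ x : G, crysF α x g = crysF α x g₀)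
    (hCnorm : ∀ (x : G), ∀ g ∈ C, x * g * x⁻¹ ∈ C)
    (d : K) (hdD : d ∈ D) (hd0 : d ≠ 0)
    (hd : ∀ x : G, σ x d * crysF α x g₀ = d)
    (hx0 : ∃ x : G, crysF α x g₀ ≠ 1) :
    d ∈ crysIC D σ α g₀ ∧
    (∀ a ∈ crysIC D σ α g₀, ∀ b ∈ crysIC D σ α g₀,
      a + b ∈ crysIC D σ α g₀ ∧
      ∀ c ∈ D, (∀ x : G, σ x c = c) → c * a ∈ crysIC D σ α g₀) ∧
    (∀ a ∈ crysIC D σ α g₀, ∀ b ∈ crysIC D σ α g₀,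
      a ≠ 0 → b ≠ 0 → ∀ x : G, σ x (a / b) = a / b) ∧
    (∀ m ∈ crysIC D σ α g₀, ∀ n ∈ crysIC D σ α g₀,
      m ≠ 0 → n ≠ 0 → m * n ∉ crysIC D σ α g₀) := by
  have hfne : ∀ x : G, crysF α x g₀ ≠ 0 := fun x => div_ne_zero (hα _ _) (hα _ _)
  -- f x g₀ = 1 ↔ σ x d = d
  have hiff : ∀ x : G, crysF α x g₀ = 1 ↔ σ x d = d := by
    intro x
    constructor
    · intro h
      have := hd x
      rwa [h, mul_one] at this
    · intro h
      have h2 := hd x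
      rw [h] at h2
      have := mul_left_cancel₀ hd0 (h2.trans (mul_one d).symm)
      exact this
  have hdmem : d ∈ crysIC D σ α g₀ := by
    refine ⟨hdD, fun x hx => ?_⟩
    exact (eq_mul_inv_iff_mul_eq₀ (hfne x)).mpr (hd x)
  refine ⟨hdmem, ?_, ?_, ?_⟩
  · intro a ha b hb
    constructor
    · refine ⟨D.add_mem ha.1 hb.1, fun x hx => ?_⟩
      rw [map_add, ha.2 x hx, hb.2 x hx, add_mul]
    · intro c hc hcfix
      refine ⟨D.mul_mem hc ha.1, fun x hx => ?_⟩
      rw [map_mul, hcfix x, ha.2 x hx, mul_assoc]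
  · intro a ha b hb ha0 hb0 x
    -- first for x with f ≠ 1
    have key : ∀ z : G, crysF α z g₀ ≠ 1 → σ z (a / b) = a / b := by
      intro z hz
      rw [map_div₀, ha.2 z hz, hb.2 z hz,
        mul_div_mul_right _ _ (inv_ne_zero (hfne z))]
    by_cases hx : crysF α x g₀ ≠ 1
    · exact key x hx
    · push_neg at hx
      obtain ⟨z₀, hz₀⟩ := hx0
      have hxd : σ x d = d := (hiff x).mp hx
      have hxz : crysF α (x * z₀) g₀ ≠ 1 := by
        intro h
        have h1 : σ (x * z₀) d = d := (hiff _).mp h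
        rw [map_mul] at h1
        have h2 : σ x (σ z₀ d) = σ x d := by rw [hxd]; exact h1
        have h3 : σ z₀ d = d := (σ x).injective h2
        exact hz₀ ((hiff z₀).mpr h3)
      have e1 : σ z₀ (a / b) = a / b := key z₀ hz₀
      have e2 : σ (x * z₀) (a / b) = a / b := key _ hxz
      rw [map_mul] at e2
      calc σ x (a / b) = σ x (σ z₀ (a / b)) := by rw [e1]
        _ = a / b := e2
  · intro m hm n hn hm0 hn0 hmn
    obtain ⟨z, hz⟩ := hx0
    have h1 := hmn.2 z hz
    rw [map_mul, hm.2 z hz, hn.2 z hz] at h1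
    apply hz
    set c := crysF α z g₀ with hc
    have hcne : c ≠ 0 := hfne z
    have h2 : m * n * c⁻¹ * c⁻¹ = m * n * c⁻¹ * 1 := by
      rw [mul_one]; linear_combination h1
    have h3 : c⁻¹ = 1 :=
      mul_left_cancel₀ (mul_ne_zero (mul_ne_zero hm0 hn0) (inv_ne_zero hcne)) h2
    exact inv_eq_one.mp h3
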